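/- For any vector r ∈ ℝ^{N−1} with entries r_2,…,r_N, the polynomial λ(τ) = ∑_{i=1}^N (A† r)_i L_i(τ) satisfies λ'(τ_i) = −r_i for every interior index i = 2,…,N−1. -/

import Mathlib

open Polynomial

lemma ftc_poly (p : ℝ[X]) (a b : ℝ) :
    ∫ t in a..b, (derivative p).eval t = p.eval b - p.eval a := by
  refine intervalIntegral.integral_eq_sub_of_hasDerivAt (f := fun x => p.eval x)
    (fun x _ => p.hasDerivAt x) ?_
  exact (p.derivative.continuous_aeval).intervalIntegrable a b

lemma lagL_natDegree' {N : ℕ} (τ : Fin N → ℝ) (hmono : StrictMono τ) (i : Fin N) :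
    (Lagrange.basis Finset.univ τ i).natDegree = N - 1 := by
  rw [Lagrange.natDegree_basis (hmono.injective.injOn) (Finset.mem_univ i), Finset.card_univ,
    Fintype.card_fin]

lemma integral_interp {N : ℕ} (τ : Fin N → ℝ) (hmono : StrictMono τ)
    (p : ℝ[X]) (hp : p.natDegree < N) (a b : ℝ) :
    ∫ t in a..b, p.eval t =
      ∑ i : Fin N, p.eval (τ i) * ∫ t in a..b, (Lagrange.basis Finset.univ τ i).eval t := by
  have hvs : Set.InjOn τ (Finset.univ : Finset (Fin N)) := hmono.injective.injOn
  have hdeg : p.degree < (Finset.univ : Finset (Fin N)).card := by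
    refine lt_of_le_of_lt p.degree_le_natDegree ?_
    simp only [Finset.card_univ, Fintype.card_fin]
    exact_mod_cast hp
  have hrep := Lagrange.eq_interpolate (f := p) hvs hdeg
  conv_lhs => rw [hrep, Lagrange.interpolate_apply]
  simp_rw [eval_finset_sum, eval_mul, eval_C]
  rw [intervalIntegral.integral_finset_sum]
  · refine Finset.sum_congr rfl fun i _ => ?_
    rw [intervalIntegral.integral_const_mul]
  · intro i _
    exact (continuous_const.mul ((Lagrange.basis Finset.univ τ i).continuous_aeval)).intervalIntegrable a b

/-- `lagL τ i` is the `i`-th Lagrange basis polynomial (of degree `N - 1`)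
for the nodes `τ 0, …, τ (N-1)`, satisfying `(lagL τ i).eval (τ j) = δᵢⱼ`. -/
noncomputable def lagL {N : ℕ} (τ : Fin N → ℝ) (i : Fin N) : ℝ[X] :=
  Lagrange.basis Finset.univ τ i

/-- `lagLp τ` is the polynomial `L_p(x) = ∏ᵢ (x - τᵢ)`. -/
noncomputable def lagLp {N : ℕ} (τ : Fin N → ℝ) : ℝ[X] :=
  ∏ i, (X - C (τ i))

/-- The differentiation matrix `D`, with `D i j = L_j'(τ i)`. -/
noncomputable def matD {N : ℕ} (τ : Fin N → ℝ) : Matrix (Fin N) (Fin N) ℝ :=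
  fun i j => (derivative (lagL τ j)).eval (τ i)

/-- The vector `D_p`, with `(D_p) i = L_p'(τ i)`. -/
noncomputable def vecDp {N : ℕ} (τ : Fin N → ℝ) : Fin N → ℝ :=
  fun i => (derivative (lagLp τ)).eval (τ i)

/-- Columns `2, …, N+1` (in 1-based numbering) of the augmented differentiation
matrix `D̃ = [D  D_p]`: column `j` (0-based, `j < N - 1`) is column `j + 1` of `D`,
and the last column is `D_p`. -/
noncomputable def matDtil2 {N : ℕ} (τ : Fin N → ℝ) : Matrix (Fin N) (Fin N) ℝ :=
  fun i j => if h : (j : ℕ) + 1 < N then matD τ i ⟨(j : ℕ) + 1, h⟩ else vecDp τ i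

/-- The quadrature rule with nodes `τ` and weights `w` integrates exactly all
polynomials of degree at most `2 * N - 3` over `[-1, 1]`. -/
def IsQuadrature {N : ℕ} (τ : Fin N → ℝ) (w : Fin N → ℝ) : Prop :=
  ∀ p : ℝ[X], p.natDegree ≤ 2 * N - 3 →
    ∑ i, w i * p.eval (τ i) = ∫ t in (-1 : ℝ)..1, p.eval t

/-- The integration matrix `A` with rows indexed (0-based) by `i : Fin (N-1)`
corresponding to the node `τ (i+1)`: `A i j = ∫_{-1}^{τ (i+1)} L_j(t) dt`. -/
noncomputable def matA {N : ℕ} (τ : Fin N → ℝ) : Matrix (Fin (N - 1)) (Fin N) ℝ :=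
  fun i j => ∫ t in (-1 : ℝ)..(τ ⟨(i : ℕ) + 1, by have := i.isLt; omega⟩), (lagL τ j).eval t

/-- The row vector `A_p`, with `(A_p) j = (1/N) ∏_{k ≠ j} 1 / (τ j - τ k)`. -/
noncomputable def rowAp {N : ℕ} (τ : Fin N → ℝ) : Fin N → ℝ :=
  fun j => (1 / (N : ℝ)) * ∏ k ∈ Finset.univ.erase j, (τ j - τ k)⁻¹

/-- The matrix `Ã` obtained by stacking `A` on top of the row vector `A_p`. -/
noncomputable def matAtil {N : ℕ} (τ : Fin N → ℝ) : Matrix (Fin N) (Fin N) ℝ :=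
  fun i j => if h : (i : ℕ) + 1 < N then matA τ ⟨(i : ℕ), by omega⟩ j else rowAp τ j

/-- The adjoint integration matrix `A† = W⁻¹ Aᵀ W_{2:N}`, with columns indexed
(0-based) by `j : Fin (N-1)` corresponding to the node `τ (j+1)`. -/
noncomputable def matAdag {N : ℕ} (τ : Fin N → ℝ) (w : Fin N → ℝ) :
    Matrix (Fin N) (Fin (N - 1)) ℝ :=
  fun i j => (w i)⁻¹ * matA τ j i * w ⟨(j : ℕ) + 1, by have := j.isLt; omega⟩

/-- `polyM τ k` is the Lagrange basis polynomial (of degree `N - 3`) for the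
interior nodes `τ 1, …, τ (N-2)`, satisfying `(polyM τ k).eval (τ m) = δₖₘ`
for interior indices `m`. -/
noncomputable def polyM {N : ℕ} (τ : Fin N → ℝ) (k : Fin N) : ℝ[X] :=
  Lagrange.basis (Finset.univ.filter fun m : Fin N => 0 < (m : ℕ) ∧ (m : ℕ) < N - 1) τ k

/-- The polynomial `λ(x) = ∑ᵢ (A† r)ᵢ Lᵢ(x)`. -/
noncomputable def lamP {N : ℕ} (τ : Fin N → ℝ) (w : Fin N → ℝ) (r : Fin (N - 1) → ℝ) : ℝ[X] :=
  ∑ i, C ((matAdag τ w).mulVec r i) * lagL τ i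

/-- evaluation of Lagrange basis at nodes is a Kronecker delta -/
lemma lagL_eval {N : ℕ} (τ : Fin N → ℝ) (hmono : StrictMono τ) (i i' : Fin N) :
    (lagL τ i).eval (τ i') = if i = i' then 1 else 0 := by
  have hvs : Set.InjOn τ (Finset.univ : Finset (Fin N)) := hmono.injective.injOn
  by_cases h : i = i'
  · subst h; simp [lagL, Lagrange.eval_basis_self hvs (Finset.mem_univ i)]
  · simp [lagL, h, Lagrange.eval_basis_of_ne h (Finset.mem_univ i')]

/-- quadrature integration-by-parts symmetry at interior nodes -/
lemma quad_symm {N : ℕ} (hN : 3 ≤ N) (τ : Fin N → ℝ) (hmono : StrictMono τ)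
    (h0 : τ ⟨0, Nat.lt_of_lt_of_le (by decide) hN⟩ = -1)
    (h1 : τ ⟨N - 1, Nat.sub_lt (Nat.lt_of_lt_of_le (by decide) hN) Nat.one_pos⟩ = 1)
    (w : Fin N → ℝ) (hquad : IsQuadrature τ w)
    (k : Fin N) (hk0 : 0 < (k : ℕ)) (hk1 : (k : ℕ) < N - 1) (j : Fin N) :
    w k * (derivative (lagL τ j)).eval (τ k)
      = - (w j * (derivative (lagL τ k)).eval (τ j)) := by
  have hLdeg : ∀ i : Fin N, (lagL τ i).natDegree = N - 1 :=
    fun i => lagL_natDegree' τ hmono i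
  have hdeg : ∀ i i' : Fin N, (lagL τ i * derivative (lagL τ i')).natDegree ≤ 2 * N - 3 := by
    intro i i'
    refine (natDegree_mul_le).trans ?_
    have := natDegree_derivative_le (lagL τ i')
    rw [hLdeg i] at *
    rw [hLdeg i'] at this
    omega
  have hq1 := hquad _ (hdeg j k)
  have hq2 := hquad _ (hdeg k j)
  have hs1 : ∑ i, w i * (lagL τ j * derivative (lagL τ k)).eval (τ i)
      = w j * (derivative (lagL τ k)).eval (τ j) := by
    rw [Finset.sum_eq_single j]
    · simp [lagL_eval τ hmono]
    · intro i _ hij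
      simp [eval_mul, lagL_eval τ hmono, (Ne.symm hij : ¬ j = i)]
    · simp
  have hs2 : ∑ i, w i * (lagL τ k * derivative (lagL τ j)).eval (τ i)
      = w k * (derivative (lagL τ j)).eval (τ k) := by
    rw [Finset.sum_eq_single k]
    · simp [lagL_eval τ hmono]
    · intro i _ hik
      simp [eval_mul, lagL_eval τ hmono, (Ne.symm hik : ¬ k = i)]
    · simp
  rw [hs1] at hq1
  rw [hs2] at hq2
  have hsum : (∫ t in (-1:ℝ)..1, (lagL τ j * derivative (lagL τ k)).eval t)
      + ∫ t in (-1:ℝ)..1, (lagL τ k * derivative (lagL τ j)).eval t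
      = (lagL τ j * lagL τ k).eval 1 - (lagL τ j * lagL τ k).eval (-1) := by
    rw [← ftc_poly (lagL τ j * lagL τ k) (-1) 1, derivative_mul]
    rw [← intervalIntegral.integral_add
      ((show Continuous fun t : ℝ => (lagL τ j * derivative (lagL τ k)).eval t from
        (lagL τ j * derivative (lagL τ k)).continuous_aeval).intervalIntegrable _ _)
      ((show Continuous fun t : ℝ => (lagL τ k * derivative (lagL τ j)).eval t from
        (lagL τ k * derivative (lagL τ j)).continuous_aeval).intervalIntegrable _ _)]
    refine intervalIntegral.integral_congr fun t _ => ?_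
    simp only [eval_add, eval_mul]
    ring
  have hk0' : k ≠ ⟨0, by omega⟩ := by
    intro h; rw [h] at hk0; simp at hk0
  have hkN : k ≠ ⟨N - 1, by omega⟩ := by
    intro h; rw [h] at hk1; simp at hk1
  have hbd1 : (lagL τ k).eval 1 = 0 := by
    rw [← h1, lagL_eval τ hmono]; simp [hkN]
  have hbd0 : (lagL τ k).eval (-1) = 0 := by
    rw [← h0, lagL_eval τ hmono]; simp [hk0']
  rw [eval_mul, eval_mul, hbd1, hbd0, mul_zero, mul_zero, sub_zero] at hsum
  rw [← hq1, ← hq2] at hsum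
  linarith

/-- At each interior node (paper indices `i = 2, …, N-1`), `λ'(τᵢ) = -rᵢ`. -/
theorem stmt8 (N : ℕ) (hN : 3 ≤ N) (τ : Fin N → ℝ) (hmono : StrictMono τ)
    (h0 : τ ⟨0, by omega⟩ = -1) (h1 : τ ⟨N - 1, by omega⟩ = 1) (w : Fin N → ℝ) (hw : ∀ i, 0 < w i) (hquad : IsQuadrature τ w) :
    ∀ r : Fin (N - 1) → ℝ, ∀ k : Fin N, 0 < (k : ℕ) → (k : ℕ) < N - 1 →
      (derivative (lamP τ w r)).eval (τ k) = - r ⟨(k : ℕ) - 1, by have := k.isLt; omega⟩ := by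
  intro r k hk0 hk1
  have hwne : ∀ i, w i ≠ 0 := fun i => (hw i).ne'
  have hstep1 : (derivative (lamP τ w r)).eval (τ k)
      = ∑ i, (matAdag τ w).mulVec r i * (derivative (lagL τ i)).eval (τ k) := by
    unfold lamP
    rw [derivative_sum, eval_finset_sum]
    refine Finset.sum_congr rfl fun i _ => ?_
    rw [derivative_C_mul, eval_mul, eval_C]
  have hsym : ∀ i : Fin N, (w i)⁻¹ * (derivative (lagL τ i)).eval (τ k)
      = -((w k)⁻¹ * (derivative (lagL τ k)).eval (τ i)) := by
    intro i
    have h := quad_symm hN τ hmono h0 h1 w hquad k hk0 hk1 i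
    have hi := hwne i
    have hk' := hwne k
    field_simp
    linear_combination h
  rw [hstep1]
  have hterm : ∀ i, (matAdag τ w).mulVec r i * (derivative (lagL τ i)).eval (τ k)
      = ∑ j : Fin (N-1), r j * w ⟨(j:ℕ)+1, by have := j.isLt; omega⟩ * (-(w k)⁻¹) *
          ((derivative (lagL τ k)).eval (τ i) * matA τ j i) := by
    intro i
    rw [Matrix.mulVec, dotProduct, Finset.sum_mul]
    refine Finset.sum_congr rfl fun j _ => ?_
    have h := hsym i
    simp only [matAdag]
    linear_combination (matA τ j i * w ⟨(j:ℕ)+1, by have := j.isLt; omega⟩ * r j) * h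
  simp_rw [hterm]
  rw [Finset.sum_comm]
  have hpdeg : (derivative (lagL τ k)).natDegree < N := by
    have h1' := natDegree_derivative_le (lagL τ k)
    have h2' : (lagL τ k).natDegree = N - 1 := lagL_natDegree' τ hmono k
    omega
  have hinner : ∀ j : Fin (N-1),
      ∑ i : Fin N, r j * w ⟨(j:ℕ)+1, by have := j.isLt; omega⟩ * (-(w k)⁻¹) *
          ((derivative (lagL τ k)).eval (τ i) * matA τ j i)
      = r j * w ⟨(j:ℕ)+1, by have := j.isLt; omega⟩ * (-(w k)⁻¹) *
          (if k = ⟨(j:ℕ)+1, by have := j.isLt; omega⟩ then 1 else 0) := by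
    intro j
    rw [← Finset.mul_sum]
    congr 1
    have hint := integral_interp τ hmono (derivative (lagL τ k)) hpdeg
      (-1) (τ ⟨(j:ℕ)+1, by have := j.isLt; omega⟩)
    have hftc := ftc_poly (lagL τ k) (-1) (τ ⟨(j:ℕ)+1, by have := j.isLt; omega⟩)
    rw [hftc] at hint
    have : ∑ i : Fin N, (derivative (lagL τ k)).eval (τ i) * matA τ j i
        = (lagL τ k).eval (τ ⟨(j:ℕ)+1, by have := j.isLt; omega⟩) - (lagL τ k).eval (-1) := by
      rw [hint]
      rfl
    rw [this, ← h0, lagL_eval τ hmono, lagL_eval τ hmono]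
    have hk0' : k ≠ ⟨0, by omega⟩ := by
      intro h; rw [h] at hk0; simp at hk0
    simp [hk0']
  simp_rw [hinner]
  set j0 : Fin (N-1) := ⟨(k:ℕ) - 1, by have := k.isLt; omega⟩ with hj0
  rw [Finset.sum_eq_single j0]
  · have hkj : k = ⟨(j0:ℕ)+1, by have := j0.isLt; omega⟩ := by
      apply Fin.eq_of_val_eq
      simp [hj0]
      omega
    rw [if_pos hkj]
    have hwk : w ⟨(j0:ℕ)+1, by have := j0.isLt; omega⟩ = w k := by rw [← hkj]
    rw [hwk]
    have hkne := hwne k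
    field_simp
  · intro j _ hj
    have : ¬ (k = ⟨(j:ℕ)+1, by have := j.isLt; omega⟩) := by
      intro h
      apply hj
      apply Fin.eq_of_val_eq
      have : (k:ℕ) = (j:ℕ)+1 := by rw [h]
      simp [hj0]
      omega
    rw [if_neg this]
    ring
  · simp
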